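/- Every regular simply sm-factorizable paratopological group G whose identity is the intersection of countably many open sets admits a continuous bijective homomorphism onto a separable metrizable paratopological group; in particular, G is strongly submetrizable and the cardinality of G is at most 𝔠 = 2^ω. -/

import Mathlib

open Topology TopologicalSpace Pointwise Function Set

def IsCozero {X : Type*} [TopologicalSpace X] (U : Set X) : Prop :=
  ∃ f : X → ℝ, Continuous f ∧ U = f ⁻¹' {x : ℝ | x ≠ 0}

/-- A paratopological group is simply sm-factorizable if every cozero set is saturated with
respect to some continuous surjective homomorphism onto a separable metrizable paratopological group. -/
def SimplySMFactorizablePara (G : Type*) [Group G] [TopologicalSpace G] : Prop :=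
  ∀ U : Set G, IsCozero U →
    ∃ (H : Type) (gH : Group H) (tH : TopologicalSpace H),
      letI := gH
      letI := tH
      ContinuousMul H ∧ SeparableSpace H ∧ MetrizableSpace H ∧
        ∃ π : G →* H, Continuous π ∧ Surjective π ∧ ⇑π ⁻¹' (⇑π '' U) = U

/-- A paratopological group is strongly submetrizable if it admits a continuous bijective
homomorphism onto a separable metrizable paratopological group. -/
def StronglySubmetrizablePara (H : Type*) [Group H] [TopologicalSpace H] : Prop :=
  ∃ (K : Type) (gK : Group K) (tK : TopologicalSpace K),
    letI := gK
    letI := tK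
    ContinuousMul K ∧ SeparableSpace K ∧ MetrizableSpace K ∧
      ∃ i : H →* K, Continuous i ∧ Bijective i

/-- Auxiliary packaging of the data provided by simple sm-factorizability for a fixed
cozero set `U`. -/
structure SMFactor (G : Type*) [Group G] [TopologicalSpace G] (U : Set G) where
  H : Type
  [gH : Group H]
  [tH : TopologicalSpace H]
  cm : ContinuousMul H
  sep : SeparableSpace H
  met : MetrizableSpace H
  hom : G →* H
  cont : Continuous hom
  surj : Surjective hom
  sat : ⇑hom ⁻¹' (⇑hom '' U) = U

attribute [instance] SMFactor.gH SMFactor.tH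

lemma smFactor_nonempty {G : Type*} [Group G] [TopologicalSpace G]
    (hG : SimplySMFactorizablePara G) {U : Set G} (hU : IsCozero U) :
    Nonempty (SMFactor G U) := by
  obtain ⟨H, gH, tH, hcm, hsep, hmet, π, hc, hs, hsat⟩ := hG U hU
  exact ⟨⟨H, hcm, hsep, hmet, π, hc, hs, hsat⟩⟩

/-- Every point of a second countable T₀ space is determined by the basic open sets
containing it, so the cardinality is at most the continuum. -/
lemma card_le_continuum_of_secondCountable (X : Type*) [TopologicalSpace X]
    [SecondCountableTopology X] [T0Space X] :
    Cardinal.mk X ≤ Cardinal.continuum := by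
  classical
  set B := countableBasis X with hB
  have hbasis := isBasis_countableBasis X
  have hinj : Function.Injective (fun x : X => {b : ↥B | x ∈ (b : Set X)}) := by
    intro x y hxy
    have hmem : ∀ b : ↥B, x ∈ (b : Set X) ↔ y ∈ (b : Set X) := by
      intro b
      have := Set.ext_iff.mp hxy b
      simpa using this
    have : Inseparable x y := by
      rw [inseparable_iff_forall_isOpen]
      intro s hs
      constructor
      · intro hx
        obtain ⟨v, hvB, hxv, hvs⟩ := hbasis.exists_subset_of_mem_open hx hs
        exact hvs ((hmem ⟨v, hvB⟩).mp hxv)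
      · intro hy
        obtain ⟨v, hvB, hyv, hvs⟩ := hbasis.exists_subset_of_mem_open hy hs
        exact hvs ((hmem ⟨v, hvB⟩).mpr hyv)
    exact this.eq
  haveI : Countable ↥B := (countable_countableBasis X).to_subtype
  calc Cardinal.mk X ≤ Cardinal.mk (Set ↥B) := Cardinal.mk_le_of_injective hinj
    _ = 2 ^ Cardinal.mk ↥B := Cardinal.mk_set
    _ ≤ 2 ^ Cardinal.aleph0 := by
        exact Cardinal.power_le_power_left (by norm_num) Cardinal.mk_le_aleph0
    _ = Cardinal.continuum := Cardinal.two_power_aleph0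

section CozeroConstruction

variable {G : Type*} [Group G] [TopologicalSpace G] [ContinuousMul G]

/-- In a group with continuous multiplication, `closure A * B ⊆ closure (A * B)`. -/
lemma closure_mul_subset_closure_mul (A B : Set G) :
    closure A * B ⊆ closure (A * B) := by
  rintro x ⟨a, ha, b, hb, rfl⟩
  have h1 : (fun y => y * b) '' closure A ⊆ closure ((fun y => y * b) '' A) :=
    image_closure_subset_closure_image (continuous_mul_right b)
  have h2 : a * b ∈ closure ((fun y => y * b) '' A) := h1 ⟨a, ha, rfl⟩
  refine closure_mono ?_ h2
  rintro z ⟨c, hc, rfl⟩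
  exact ⟨c, hc, b, hb, rfl⟩

/-- The semiregularization trick: in a paratopological group, the closure of any set `A`
is contained in the interior of the closure of `A * W` for every open neighbourhood `W`
of the identity. -/
lemma closure_subset_interior_closure_mul (A : Set G) {W : Set G} (hW : IsOpen W)
    (h1 : (1 : G) ∈ W) : closure A ⊆ interior (closure (A * W)) := by
  intro z hz
  have hsub : (fun u => z * u) '' W ⊆ closure (A * W) := by
    rintro _ ⟨u, hu, rfl⟩
    exact closure_mul_subset_closure_mul A W ⟨z, hz, u, hu, rfl⟩
  have hopen : IsOpen ((fun u => z * u) '' W) := (Homeomorph.mulLeft z).isOpenMap W hW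
  exact interior_maximal hsub hopen ⟨1, h1, mul_one z⟩

/-- Witness indices for the dyadic Urysohn-type family. -/
def mwit : ℕ → ℕ → ℕ
  | 0, _ => 3
  | n + 1, j => mwit n (j / 2) + 2

/-- The dyadic Urysohn-type family of open sets in a paratopological group. -/
def wfam (U : ℕ → Set G) (V : Set G) : ℕ → ℕ → Set G
  | 0, k => if k = 0 then U 3 else V
  | n + 1, j =>
    if Even j then wfam U V n (j / 2)
    else interior (closure (wfam U V n (j / 2) * U (mwit n (j / 2) + 1)))

variable (U : ℕ → Set G) (V : Set G)

lemma wfam_zero (k : ℕ) : wfam U V 0 k = if k = 0 then U 3 else V := rfl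

lemma wfam_succ (n j : ℕ) :
    wfam U V (n + 1) j =
      if Even j then wfam U V n (j / 2)
      else interior (closure (wfam U V n (j / 2) * U (mwit n (j / 2) + 1))) := rfl

lemma wfam_succ_even (n t : ℕ) : wfam U V (n + 1) (2 * t) = wfam U V n t := by
  rw [wfam_succ, if_pos ⟨t, two_mul t⟩, Nat.mul_div_cancel_left t two_pos]

lemma wfam_succ_odd (n t : ℕ) :
    wfam U V (n + 1) (2 * t + 1) =
      interior (closure (wfam U V n t * U (mwit n t + 1))) := by
  have hd : (2 * t + 1) / 2 = t := by omega
  have hne : ¬ Even (2 * t + 1) := by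
    simp [Nat.even_add_one, Nat.even_mul]
  rw [wfam_succ, if_neg hne, hd]

lemma mwit_succ (n j : ℕ) : mwit n (j / 2) + 2 = mwit (n + 1) j := rfl

lemma wfam_open (hUo : ∀ n, IsOpen (U n)) (hV : IsOpen V) :
    ∀ n k, IsOpen (wfam U V n k) := by
  intro n
  induction n with
  | zero =>
    intro k
    rw [wfam_zero]
    split <;> [exact hUo 3; exact hV]
  | succ n ih =>
    intro j
    rw [wfam_succ]
    split
    · exact ih _
    · exact isOpen_interior

lemma wfam_one_mem (hU1 : ∀ n, (1 : G) ∈ U n) : ∀ n, (1 : G) ∈ wfam U V n 0 := by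
  intro n
  induction n with
  | zero => rw [wfam_zero, if_pos rfl]; exact hU1 3
  | succ n ih =>
    have h0 : (0 : ℕ) = 2 * 0 := rfl
    rw [h0, wfam_succ_even]
    exact ih

lemma wfam_top : ∀ n, wfam U V n (2 ^ n) = V := by
  intro n
  induction n with
  | zero => rw [pow_zero, wfam_zero, if_neg one_ne_zero]
  | succ n ih =>
    have h : (2 : ℕ) ^ (n + 1) = 2 * 2 ^ n := by rw [pow_succ, Nat.mul_comm]
    rw [h, wfam_succ_even]
    exact ih

section Invariants

variable (hUo : ∀ n, IsOpen (U n)) (hU1 : ∀ n, (1 : G) ∈ U n)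
  (hUmul : ∀ n, U (n + 1) * U (n + 1) ⊆ U n) (hUdec : ∀ n, U (n + 1) ⊆ U n)
  (hV : IsOpen V) (hU0V : closure (U 0) ⊆ V)

include hUo hU1 hUmul hUdec hU0V in
lemma wfam_gap : ∀ n k, k < 2 ^ n →
    closure (wfam U V n k * U (mwit n k)) ⊆ wfam U V n (k + 1) := by
  intro n
  induction n with
  | zero =>
    intro k hk
    interval_cases k
    have h1 : wfam U V 0 0 = U 3 := by rw [wfam_zero, if_pos rfl]
    have h2 : wfam U V 0 1 = V := by rw [wfam_zero, if_neg one_ne_zero]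
    have hm : mwit 0 0 = 3 := rfl
    rw [h1, h2, hm]
    calc closure (U 3 * U 3) ⊆ closure (U 2) := closure_mono (hUmul 2)
      _ ⊆ closure (U 0) := closure_mono ((hUdec 1).trans (hUdec 0))
      _ ⊆ V := hU0V
  | succ n ih =>
    intro j hj
    rcases Nat.even_or_odd j with hje | hjo
    · -- `j = 2 * t` : the pair `(wfam n t, middle)`
      obtain ⟨t, rfl⟩ : ∃ t, j = 2 * t := by
        obtain ⟨t, ht⟩ := hje
        exact ⟨t, by omega⟩
      have hdiv : (2 * t) / 2 = t := by omega
      have hmw : mwit (n + 1) (2 * t) = mwit n t + 2 := by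
        rw [← mwit_succ, hdiv]
      rw [hmw, wfam_succ_even, wfam_succ_odd]
      set A := wfam U V n t
      set M := mwit n t
      have step1 : closure (A * U (M + 2)) ⊆
          interior (closure (A * U (M + 2) * U (M + 2))) :=
        closure_subset_interior_closure_mul _ (hUo (M + 2)) (hU1 (M + 2))
      have step2 : A * U (M + 2) * U (M + 2) ⊆ A * U (M + 1) := by
        rw [mul_assoc]
        exact mul_subset_mul_left (hUmul (M + 1))
      exact step1.trans (interior_mono (closure_mono step2))
    · -- `j = 2 * t + 1` : the pair `(middle, wfam n (t+1))`
      obtain ⟨t, rfl⟩ : ∃ t, j = 2 * t + 1 := by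
        obtain ⟨t, ht⟩ := hjo
        exact ⟨t, ht⟩
      have ht2 : t < 2 ^ n := by
        have := hj
        rw [pow_succ] at this
        omega
      have hdiv : (2 * t + 1) / 2 = t := by omega
      have hmw : mwit (n + 1) (2 * t + 1) = mwit n t + 2 := by
        rw [← mwit_succ, hdiv]
      have hnext : (2 * t + 1) + 1 = 2 * (t + 1) := by ring
      rw [hmw, wfam_succ_odd, hnext, wfam_succ_even]
      set A := wfam U V n t
      set M := mwit n t
      have step1 : interior (closure (A * U (M + 1))) * U (M + 2) ⊆
          closure (A * U (M + 1)) * U (M + 2) :=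
        mul_subset_mul_right interior_subset
      have step2 : closure (A * U (M + 1)) * U (M + 2) ⊆
          closure (A * U (M + 1) * U (M + 2)) :=
        closure_mul_subset_closure_mul _ _
      have step3 : A * U (M + 1) * U (M + 2) ⊆ A * U M := by
        rw [mul_assoc]
        refine mul_subset_mul_left ?_
        exact fun x hx => hUmul M (mul_subset_mul_left (hUdec (M + 1)) hx)
      have hfinal : closure (interior (closure (A * U (M + 1))) * U (M + 2)) ⊆
          closure (A * U M) :=
        calc closure (interior (closure (A * U (M + 1))) * U (M + 2))
            ⊆ closure (closure (A * U (M + 1) * U (M + 2))) :=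
              closure_mono (step1.trans step2)
          _ = closure (A * U (M + 1) * U (M + 2)) := closure_closure
          _ ⊆ closure (A * U M) := closure_mono step3
      exact hfinal.trans (ih t ht2)

include hUo hU1 hUmul hUdec hU0V in
lemma wfam_succ_subset : ∀ n k, k < 2 ^ n → wfam U V n k ⊆ wfam U V n (k + 1) := by
  intro n k hk a ha
  refine wfam_gap U V hUo hU1 hUmul hUdec hU0V n k hk (subset_closure ?_)
  exact ⟨a, ha, 1, hU1 _, mul_one a⟩

include hUo hU1 hUmul hUdec hU0V in
lemma wfam_mono_level : ∀ n j j', j ≤ j' → j' ≤ 2 ^ n → wfam U V n j ⊆ wfam U V n j' := by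
  intro n j j' hle hb
  induction j', hle using Nat.le_induction with
  | base => exact subset_rfl
  | succ j'' hj'' ih =>
    refine (ih (by omega)).trans ?_
    exact wfam_succ_subset U V hUo hU1 hUmul hUdec hU0V n j'' (by omega)

lemma wfam_lift : ∀ (d n k : ℕ), wfam U V (n + d) (k * 2 ^ d) = wfam U V n k := by
  intro d
  induction d with
  | zero => intro n k; rw [pow_zero, Nat.mul_one]; rfl
  | succ d ih =>
    intro n k
    have h1 : k * 2 ^ (d + 1) = 2 * (k * 2 ^ d) := by ring
    have h2 : n + (d + 1) = (n + d) + 1 := rfl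
    rw [h2, h1, wfam_succ_even]
    exact ih n k

include hUo hU1 hUmul hUdec hU0V in
lemma wfam_mono {n k n' k' : ℕ} (hk : k ≤ 2 ^ n)
    (h : (k' : ℝ) / 2 ^ n' ≤ (k : ℝ) / 2 ^ n) :
    wfam U V n' k' ⊆ wfam U V n k := by
  have hineq : k' * 2 ^ n ≤ k * 2 ^ n' := by
    have h2n : (0 : ℝ) < 2 ^ n := by positivity
    have h2n' : (0 : ℝ) < 2 ^ n' := by positivity
    have := (div_le_div_iff₀ h2n' h2n).mp h
    exact_mod_cast this
  have hb : k * 2 ^ n' ≤ 2 ^ (n' + n) := by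
    calc k * 2 ^ n' ≤ 2 ^ n * 2 ^ n' := Nat.mul_le_mul_right _ hk
      _ = 2 ^ (n' + n) := by rw [← pow_add, Nat.add_comm]
  calc wfam U V n' k' = wfam U V (n' + n) (k' * 2 ^ n) := (wfam_lift U V n n' k').symm
    _ ⊆ wfam U V (n' + n) (k * 2 ^ n') :=
        wfam_mono_level U V hUo hU1 hUmul hUdec hU0V _ _ _ hineq hb
    _ = wfam U V (n + n') (k * 2 ^ n') := by rw [Nat.add_comm]
    _ = wfam U V n k := wfam_lift U V n' n k

include hUo hU1 hUmul hUdec hU0V in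
lemma wfam_subset_V : ∀ n k, k ≤ 2 ^ n → wfam U V n k ⊆ V := by
  intro n k hk
  refine (wfam_mono_level U V hUo hU1 hUmul hUdec hU0V n k (2 ^ n) hk le_rfl).trans ?_
  rw [wfam_top]

end Invariants

end CozeroConstruction

/-- **(Banakh–Ravsky type construction)** In a regular paratopological group, every
neighbourhood of the identity contains a cozero neighbourhood of the identity. -/
lemma exists_cozero_nhd {G : Type*} [Group G] [TopologicalSpace G] [ContinuousMul G]
    [RegularSpace G] {V : Set G} (hV : IsOpen V) (h1 : (1 : G) ∈ V) :
    ∃ U : Set G, IsCozero U ∧ (1 : G) ∈ U ∧ U ⊆ V := by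
  classical
  -- a base open set whose closure is inside `V`, using regularity
  obtain ⟨C, ⟨hCn, hCc⟩, hCV⟩ := (closed_nhds_basis (1 : G)).mem_iff.mp (hV.mem_nhds h1)
  set U₀ : Set G := interior C with hU₀
  have hU₀o : IsOpen U₀ := isOpen_interior
  have hU₀1 : (1 : G) ∈ U₀ := mem_interior_iff_mem_nhds.mpr hCn
  have hU₀cl : closure U₀ ⊆ V := by
    refine (closure_mono interior_subset).trans ?_
    rw [hCc.closure_eq]
    exact hCV
  -- a shrinking sequence of neighbourhoods of `1`
  have hstep : ∀ W : Set G, IsOpen W → (1 : G) ∈ W →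
      ∃ W', IsOpen W' ∧ (1 : G) ∈ W' ∧ W' * W' ⊆ W ∧ W' ⊆ W := by
    intro W hWo hW1
    obtain ⟨W', h'o, h'1, h'mul⟩ := exists_open_nhds_one_mul_subset (hWo.mem_nhds hW1)
    refine ⟨W' ∩ W, h'o.inter hWo, ⟨h'1, hW1⟩, ?_, inter_subset_right⟩
    exact (mul_subset_mul inter_subset_left inter_subset_left).trans h'mul
  choose! next hno hn1 hnmul hnsub using hstep
  set Useq : ℕ → Set G := fun n => next^[n] U₀ with hUseq
  have hit : ∀ n, Useq (n + 1) = next (Useq n) := fun n =>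
    Function.iterate_succ_apply' next n U₀
  have hbasic : ∀ n, IsOpen (Useq n) ∧ (1 : G) ∈ Useq n := by
    intro n
    induction n with
    | zero => exact ⟨hU₀o, hU₀1⟩
    | succ n ih =>
      rw [hit]
      exact ⟨hno _ ih.1 ih.2, hn1 _ ih.1 ih.2⟩
  have hUo : ∀ n, IsOpen (Useq n) := fun n => (hbasic n).1
  have hU1 : ∀ n, (1 : G) ∈ Useq n := fun n => (hbasic n).2
  have hUmul : ∀ n, Useq (n + 1) * Useq (n + 1) ⊆ Useq n := by
    intro n
    rw [hit]
    exact hnmul _ (hUo n) (hU1 n)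
  have hUdec : ∀ n, Useq (n + 1) ⊆ Useq n := by
    intro n
    rw [hit]
    exact hnsub _ (hUo n) (hU1 n)
  have hU0cl : closure (Useq 0) ⊆ V := by
    have : Useq 0 = U₀ := rfl
    rw [this]
    exact hU₀cl
  -- the dyadic family and the function
  set w : ℕ → ℕ → Set G := wfam Useq V with hw
  set S : G → Set ℝ := fun x =>
    insert (1 : ℝ) {q | ∃ n k : ℕ, k ≤ 2 ^ n ∧ x ∈ w n k ∧ q = (k : ℝ) / 2 ^ n} with hS
  set f : G → ℝ := fun x => sInf (S x) with hf
  have hSne : ∀ x, (S x).Nonempty := fun x => ⟨1, mem_insert _ _⟩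
  have hSnonneg : ∀ x, ∀ s ∈ S x, (0 : ℝ) ≤ s := by
    intro x s hs
    rcases hs with hs | ⟨n, k, _, _, rfl⟩
    · rw [hs]; norm_num
    · positivity
  have hSbdd : ∀ x, BddBelow (S x) := fun x => ⟨0, fun s hs => hSnonneg x s hs⟩
  have hfle1 : ∀ x, f x ≤ 1 := fun x => csInf_le (hSbdd x) (mem_insert _ _)
  have hf0 : ∀ x, 0 ≤ f x := fun x => le_csInf (hSne x) (hSnonneg x)
  have hf1 : f 1 = 0 := by
    refine le_antisymm ?_ (hf0 1)
    have hmem : (0 : ℝ) ∈ S 1 := by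
      refine Or.inr ⟨0, 0, ?_, ?_, by norm_num⟩
      · norm_num
      · exact wfam_one_mem Useq V hU1 0
    exact csInf_le (hSbdd 1) hmem
  have houtside : ∀ x, x ∉ V → f x = 1 := by
    intro x hx
    have : S x = {1} := by
      apply Subset.antisymm
      · rintro s (hs | ⟨n, k, hk, hxw, rfl⟩)
        · exact hs
        · exact absurd (wfam_subset_V Useq V hUo hU1 hUmul hUdec hU0cl n k hk hxw) hx
      · rintro s rfl
        exact mem_insert _ _
    rw [hf]
    simp only [this, csInf_singleton]
  -- one-sided continuity estimates
  have lemA : ∀ x a, f x < a → ∃ O, IsOpen O ∧ x ∈ O ∧ ∀ y ∈ O, f y < a := by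
    intro x a hxa
    obtain ⟨s, hsS, hsa⟩ := exists_lt_of_csInf_lt (hSne x) hxa
    rcases hsS with hs1 | ⟨n, k, hk, hxw, rfl⟩
    · subst hs1
      exact ⟨univ, isOpen_univ, mem_univ x, fun y _ => lt_of_le_of_lt (hfle1 y) hsa⟩
    · refine ⟨w n k, wfam_open Useq V hUo hV n k, hxw, fun y hy => ?_⟩
      exact lt_of_le_of_lt (csInf_le (hSbdd y) (Or.inr ⟨n, k, hk, hy, rfl⟩)) hsa
  have lemB : ∀ x a, a < f x → ∃ O, IsOpen O ∧ x ∈ O ∧ ∀ y ∈ O, a < f y := by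
    intro x a hax
    rcases lt_or_ge a 0 with ha | ha
    · exact ⟨univ, isOpen_univ, mem_univ x, fun y _ => lt_of_lt_of_le ha (hf0 y)⟩
    · -- position a dyadic pair strictly between `a` and `f x`
      have hfa : (0 : ℝ) < f x - a := sub_pos.mpr hax
      obtain ⟨n, hn⟩ := pow_unbounded_of_one_lt (2 / (f x - a)) (one_lt_two (α := ℝ))
      have h2n : (0 : ℝ) < 2 ^ n := by positivity
      have hsmall : 2 / (2 : ℝ) ^ n < f x - a := by
        rw [div_lt_iff₀ h2n]
        rw [div_lt_iff₀ hfa] at hn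
        linarith [hn]
      set k : ℕ := ⌊a * 2 ^ n⌋₊ + 1 with hkdef
      have hak : a < (k : ℝ) / 2 ^ n := by
        rw [lt_div_iff₀ h2n]
        have := Nat.lt_floor_add_one (a * 2 ^ n)
        rw [hkdef]
        push_cast
        linarith
      have hk1 : ((k : ℝ) + 1) / 2 ^ n < f x := by
        have hfl : (⌊a * 2 ^ n⌋₊ : ℝ) ≤ a * 2 ^ n := Nat.floor_le (by positivity)
        have : ((k : ℝ) + 1) ≤ a * 2 ^ n + 2 := by
          rw [hkdef]
          push_cast
          linarith
        calc ((k : ℝ) + 1) / 2 ^ n ≤ (a * 2 ^ n + 2) / 2 ^ n := by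
              gcongr
          _ = a + 2 / 2 ^ n := by field_simp
          _ < a + (f x - a) := by linarith
          _ = f x := by ring
      have hk2n : k + 1 < 2 ^ n := by
        have h1' : ((k : ℝ) + 1) / 2 ^ n < 1 := lt_of_lt_of_le hk1 (hfle1 x)
        rw [div_lt_one h2n] at h1'
        exact_mod_cast h1'
      have hxw : x ∉ w n (k + 1) := by
        intro hmem
        have : f x ≤ ((k : ℝ) + 1) / 2 ^ n := by
          refine csInf_le (hSbdd x) (Or.inr ⟨n, k + 1, le_of_lt hk2n, hmem, ?_⟩)
          push_cast
          ring
        linarith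
      have hxcl : x ∉ closure (w n k) := by
        intro hmem
        have hsub1 : closure (w n k) ⊆ closure (w n k * Useq (mwit n k)) := by
          refine closure_mono fun b hb => ⟨b, hb, 1, hU1 _, mul_one b⟩
        have := wfam_gap Useq V hUo hU1 hUmul hUdec hU0cl n k (by omega) (hsub1 hmem)
        exact hxw this
      refine ⟨(closure (w n k))ᶜ, isOpen_compl_iff.mpr isClosed_closure, hxcl, ?_⟩
      intro y hy
      refine lt_of_lt_of_le hak (le_csInf (hSne y) ?_)
      rintro s (hs1 | ⟨n', k', hk', hyw, rfl⟩)
      · subst hs1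
        rw [div_le_one h2n]
        have : (k : ℝ) ≤ 2 ^ n := by
          have : ((k : ℕ) : ℝ) ≤ ((2 ^ n : ℕ) : ℝ) := by exact_mod_cast (by omega : k ≤ 2 ^ n)
          push_cast at this ⊢
          linarith
        exact this
      · by_contra hlt
        push_neg at hlt
        have hsub : w n' k' ⊆ w n k :=
          wfam_mono Useq V hUo hU1 hUmul hUdec hU0cl (by omega) (le_of_lt hlt)
        exact hy (subset_closure (hsub hyw))
  -- continuity
  have hfcont : Continuous f := by
    rw [continuous_iff_continuousAt]
    intro x
    rw [ContinuousAt, Metric.tendsto_nhds]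
    intro ε hε
    obtain ⟨O₁, hO₁o, hxO₁, hO₁⟩ := lemA x (f x + ε) (by linarith)
    obtain ⟨O₂, hO₂o, hxO₂, hO₂⟩ := lemB x (f x - ε) (by linarith)
    refine Filter.eventually_of_mem ((hO₁o.inter hO₂o).mem_nhds ⟨hxO₁, hxO₂⟩) ?_
    intro y hy
    have h1' := hO₁ y hy.1
    have h2' := hO₂ y hy.2
    rw [Real.dist_eq, abs_sub_lt_iff]
    constructor <;> linarith
  -- the cozero set
  refine ⟨(fun x => 1 - f x) ⁻¹' {t : ℝ | t ≠ 0}, ⟨fun x => 1 - f x,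
    continuous_const.sub hfcont, rfl⟩, ?_, ?_⟩
  · show (1 : ℝ) - f 1 ≠ 0
    rw [hf1]
    norm_num
  · intro x hx
    by_contra hxV
    have : (1 : ℝ) - f x ≠ 0 := hx
    rw [houtside x hxV] at this
    simp at this

/-- Every regular simply sm-factorizable paratopological group of countable pseudocharacter is
strongly submetrizable and has cardinality at most 𝔠. -/
theorem statement14 (G : Type*) [Group G] [TopologicalSpace G] [ContinuousMul G]
    [T1Space G] [RegularSpace G] (hG : SimplySMFactorizablePara G)
    (hpsi : ∃ V : ℕ → Set G, (∀ n, IsOpen (V n)) ∧ ({(1 : G)} : Set G) = ⋂ n, V n) :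
    StronglySubmetrizablePara G ∧ Cardinal.mk G ≤ Cardinal.continuum := by
  classical
  obtain ⟨V, hVopen, hVint⟩ := hpsi
  have h1V : ∀ n, (1 : G) ∈ V n := by
    have : (1 : G) ∈ ⋂ n, V n := by rw [← hVint]; exact rfl
    exact fun n => mem_iInter.mp this n
  choose U hUcoz hU1 hUV using fun n => exists_cozero_nhd (hVopen n) (h1V n)
  have hF : ∀ n, Nonempty (SMFactor G (U n)) := fun n => smFactor_nonempty hG (hUcoz n)
  let F : ∀ n, SMFactor G (U n) := fun n => Classical.choice (hF n)
  let H : ℕ → Type := fun n => (F n).H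
  letI : ∀ n, Group (H n) := fun n => (F n).gH
  letI : ∀ n, TopologicalSpace (H n) := fun n => (F n).tH
  haveI hcm : ∀ n, ContinuousMul (H n) := fun n => (F n).cm
  haveI hsep : ∀ n, SeparableSpace (H n) := fun n => (F n).sep
  haveI hmet : ∀ n, MetrizableSpace (H n) := fun n => (F n).met
  haveI hsc : ∀ n, SecondCountableTopology (H n) := by
    intro n
    letI : MetricSpace (H n) := TopologicalSpace.metrizableSpaceMetric (H n)
    exact UniformSpace.secondCountable_of_separable (H n)
  haveI ht3 : ∀ n, T3Space (H n) := by
    intro n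
    letI : MetricSpace (H n) := TopologicalSpace.metrizableSpaceMetric (H n)
    infer_instance
  -- the product
  let K0 : Type := ∀ n, H n
  haveI : SecondCountableTopology K0 := by infer_instance
  haveI : T3Space K0 := by infer_instance
  haveI : MetrizableSpace K0 := by infer_instance
  -- the diagonal homomorphism
  let φ : G →* K0 :=
    { toFun := fun g n => (F n).hom g
      map_one' := by funext n; exact map_one (F n).hom
      map_mul' := by intro a b; funext n; exact map_mul (F n).hom a b }
  have hφc : Continuous φ := continuous_pi fun n => (F n).cont
  have hφinj : Function.Injective φ := by
    intro a b hab
    have hn : ∀ n, (F n).hom a = (F n).hom b := fun n => congrFun hab n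
    have key : ∀ n, a⁻¹ * b ∈ U n := by
      intro n
      have h1' : (F n).hom (a⁻¹ * b) = 1 := by
        rw [map_mul, map_inv, hn n, inv_mul_cancel]
      have hmem : a⁻¹ * b ∈ ⇑(F n).hom ⁻¹' (⇑(F n).hom '' U n) := by
        refine ⟨1, hU1 n, ?_⟩
        rw [h1', map_one]
      rw [(F n).sat] at hmem
      exact hmem
    have hmemV : a⁻¹ * b ∈ ⋂ n, V n := mem_iInter.mpr fun n => hUV n (key n)
    rw [← hVint] at hmemV
    have : a⁻¹ * b = 1 := hmemV
    exact (inv_mul_eq_one.mp this)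
  -- the image subgroup
  let K : Type := ↥φ.range
  haveI : SecondCountableTopology K := secondCountableTopology_induced K K0 Subtype.val
  haveI : MetrizableSpace K := IsEmbedding.subtypeVal.metrizableSpace
  haveI : SeparableSpace K := SecondCountableTopology.to_separableSpace
  haveI : ContinuousMul K :=
    Topology.IsInducing.continuousMul
      ({ toFun := Subtype.val, map_mul' := fun _ _ => rfl } : MulHom K K0) ⟨rfl⟩
  have hstrong : StronglySubmetrizablePara G := by
    refine ⟨K, inferInstance, inferInstance, ?_⟩
    refine ⟨inferInstance, inferInstance, inferInstance, φ.rangeRestrict, ?_, ?_, ?_⟩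
    · exact Continuous.subtype_mk hφc _
    · intro a b hab
      exact hφinj (congrArg Subtype.val hab)
    · exact φ.rangeRestrict_surjective
  refine ⟨hstrong, ?_⟩
  have h1 : Cardinal.lift.{0} (Cardinal.mk G) ≤ Cardinal.lift (Cardinal.mk K0) :=
    Cardinal.lift_mk_le'.mpr ⟨⟨φ, hφinj⟩⟩
  rw [Cardinal.lift_uzero] at h1
  have h2 : Cardinal.mk K0 ≤ Cardinal.continuum :=
    card_le_continuum_of_secondCountable K0
  calc Cardinal.mk G ≤ Cardinal.lift (Cardinal.mk K0) := h1
    _ ≤ Cardinal.lift Cardinal.continuum := Cardinal.lift_le.mpr h2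
    _ = Cardinal.continuum := Cardinal.lift_continuum
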